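/- arXiv:2103.02053 — 5 statements merged into one kernel-verified Lean document; each statement's English description precedes it below -/
import Mathlib

section
/- Let u_n(z) = z^n (d^n/dz^n) ₂F₁(α, β; γ; z). Then u_n satisfies the second-order differential equation u_n'' + ((γ-n)/z + (δ+n)/(z-1)) u_n' + (n(1-γ)/z² + (αβ + n(α+β-δ))/(z(z-1))) u_n = 0, where δ = α + β + 1 - γ. -/
open PowerSeries

/-- The Pochhammer symbol `(a)_k = a(a+1)⋯(a+k-1)`. -/
noncomputable def poch (a : ℂ) (k : ℕ) : ℂ := (ascPochhammer ℂ k).eval a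

/-- The Gauss hypergeometric series `₂F₁(α, β; γ; z)` as a formal power series. -/
noncomputable def gauss (α β γ : ℂ) : PowerSeries ℂ :=
  PowerSeries.mk fun k => poch α k * poch β k / (poch γ k * (k.factorial : ℂ))

/-- `u_n(z) = z^n (dⁿ/dzⁿ) ₂F₁(α, β; γ; z)` as a formal power series. -/
noncomputable def gaussU (α β γ : ℂ) (n : ℕ) : PowerSeries ℂ :=
  X ^ n * (fun f => derivative ℂ f)^[n] (gauss α β γ)

lemma poch_succ (a : ℂ) (k : ℕ) : poch a (k+1) = poch a k * (a + k) := by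
  simp [poch, ascPochhammer_succ_eval]

lemma poch_ne_zero {γ : ℂ} (hγ : ∀ m : ℕ, γ ≠ -(m : ℂ)) (m : ℕ) : poch γ m ≠ 0 := by
  induction m with
  | zero => simp [poch]
  | succ m ih =>
    rw [poch_succ]
    refine mul_ne_zero ih fun h => hγ m ?_
    linear_combination h

lemma coeff_deriv_iter (f : ℂ⟦X⟧) (n k : ℕ) :
    coeff k ((fun f => derivative ℂ f)^[n] f)
      = coeff (k + n) f * (ascPochhammer ℂ n).eval ((k : ℂ) + 1) := by
  induction n generalizing f with
  | zero => simp
  | succ n ih =>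
    rw [Function.iterate_succ_apply, ih, PowerSeries.coeff_derivative,
      ascPochhammer_succ_eval]
    push_cast
    ring_nf

lemma poch_factorial (n k : ℕ) :
    (ascPochhammer ℂ n).eval ((k : ℂ) + 1) * (k.factorial : ℂ) = ((k+n).factorial : ℂ) := by
  have h : ((k:ℂ)+1) = ((k+1 : ℕ) : ℂ) := by push_cast; ring
  rw [h, ← ascPochhammer_eval_cast, ascPochhammer_nat_eq_ascFactorial, ← Nat.cast_mul,
    mul_comm, Nat.factorial_mul_ascFactorial]

lemma coeff_gaussU_of_lt (α β γ : ℂ) {n m : ℕ} (h : m < n) :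
    coeff m (gaussU α β γ n) = 0 := by
  rw [gaussU, PowerSeries.coeff_X_pow_mul', if_neg (by omega)]

lemma coeff_gaussU (α β γ : ℂ) {n m : ℕ} (h : n ≤ m) :
    coeff m (gaussU α β γ n)
      = poch α m * poch β m / (poch γ m * ((m - n).factorial : ℂ)) := by
  rw [gaussU, PowerSeries.coeff_X_pow_mul', if_pos h, coeff_deriv_iter, gauss, coeff_mk]
  have h1 : m - n + n = m := by omega
  rw [h1]
  have h2 := poch_factorial n (m - n)
  rw [h1] at h2
  have hf : (((m-n).factorial : ℕ) : ℂ) ≠ 0 := Nat.cast_ne_zero.mpr (Nat.factorial_ne_zero _)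
  have hp : (ascPochhammer ℂ n).eval (((m-n) : ℕ) + 1 : ℂ) ≠ 0 := by
    intro h0
    rw [h0, zero_mul] at h2
    exact (Nat.cast_ne_zero.mpr (Nat.factorial_ne_zero m)) h2.symm
  rcases eq_or_ne (poch γ m) 0 with h0 | h0
  · simp [h0]
  · rw [div_mul_eq_mul_div, div_eq_div_iff
      (mul_ne_zero h0 (Nat.cast_ne_zero.mpr (Nat.factorial_ne_zero m))) (mul_ne_zero h0 hf)]
    linear_combination poch α m * poch β m * poch γ m * h2

lemma gaussU_rec (α β γ : ℂ) (hγ : ∀ m : ℕ, γ ≠ -(m : ℂ)) (n m : ℕ) :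
    (α + m) * (β + m) * coeff m (gaussU α β γ n)
      = ((m:ℂ) + 1 - n) * (γ + m) * coeff (m+1) (gaussU α β γ n) := by
  rcases lt_or_ge m n with h | h
  · rw [coeff_gaussU_of_lt α β γ h, mul_zero]
    rcases eq_or_lt_of_le (Nat.succ_le_of_lt h) with h1 | h1
    · have : ((m:ℂ) + 1 - n) = 0 := by
        rw [← h1]; push_cast; ring
      rw [this, zero_mul, zero_mul]
    · rw [coeff_gaussU_of_lt α β γ h1, mul_zero]
  · rw [coeff_gaussU α β γ h, coeff_gaussU α β γ (le_trans h (Nat.le_succ m)),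
      show m + 1 - n = (m - n) + 1 from by omega, poch_succ, poch_succ, poch_succ,
      Nat.factorial_succ]
    have hγm : γ + m ≠ 0 := fun h0 => hγ m (by linear_combination h0)
    have hpγ : poch γ m ≠ 0 := poch_ne_zero hγ m
    have hf : (((m-n).factorial : ℕ) : ℂ) ≠ 0 := Nat.cast_ne_zero.mpr (Nat.factorial_ne_zero _)
    have hmn : ((m-n:ℕ):ℂ) = (m:ℂ) - n := by
      push_cast [Nat.cast_sub h]; ring
    have hne : (m:ℂ) - n + 1 ≠ 0 := by
      intro h0
      have h3 : ((m+1 : ℕ) : ℂ) = (n : ℂ) := by push_cast; linear_combination h0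
      have h4 : m + 1 = n := Nat.cast_inj.mp h3
      omega
    rw [← mul_div_assoc, ← mul_div_assoc]
    push_cast [hmn]
    rw [div_eq_div_iff (mul_ne_zero hpγ hf)
      (mul_ne_zero (mul_ne_zero hpγ hγm) (mul_ne_zero hne hf))]
    ring

/-- With `δ = α+β+1-γ`, each `u_n` satisfies
`u_n'' + ((γ-n)/z + (δ+n)/(z-1)) u_n' + (n(1-γ)/z² + (αβ + n(α+β-δ))/(z(z-1))) u_n = 0`,
stated in the cleared-denominator form
`z²(z-1) u_n'' + z((γ-n)(z-1) + (δ+n)z) u_n' + (n(1-γ)(z-1) + (αβ + n(α+β-δ))z) u_n = 0`. -/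
theorem gaussU_ode (α β γ δ : ℂ) (hδ : δ = α + β + 1 - γ)
    (hγ : ∀ m : ℕ, γ ≠ -(m : ℂ)) (n : ℕ) :
    X ^ 2 * (X - 1) * derivative ℂ (derivative ℂ (gaussU α β γ n))
      + X * (C (γ - n) * (X - 1) + C (δ + n) * X) * derivative ℂ (gaussU α β γ n)
      + (C (n * (1 - γ)) * (X - 1) + C (α * β + n * (α + β - δ)) * X)
          * gaussU α β γ n = 0 := by
  subst hδ
  set u := gaussU α β γ n with hu
  set u1 := derivative ℂ u with hu1
  set u2 := derivative ℂ u1 with hu2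
  have key := gaussU_rec α β γ hγ n
  have hC : ∀ c : ℂ, ∀ f : ℂ⟦X⟧, C c * f = c • f := fun c f => by
    rw [PowerSeries.smul_eq_C_mul]
  rw [show X ^ 2 * (X - 1) * u2
      + X * (C (γ - n) * (X - 1) + C ((α+β+1-γ) + n) * X) * u1
      + (C (n * (1 - γ)) * (X - 1) + C (α * β + n * (α + β - (α+β+1-γ))) * X) * u
    = X*(X*(X*u2)) - X*(X*u2) + C (γ-(n:ℂ)) * (X*(X*u1)) - C (γ-(n:ℂ)) * (X*u1)
      + C ((α+β+1-γ)+(n:ℂ)) * (X*(X*u1)) + C ((n:ℂ)*(1-γ)) * (X*u)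
      - C ((n:ℂ)*(1-γ)) * u
      + C (α*β+(n:ℂ)*(α+β-(α+β+1-γ))) * (X*u) from by ring]
  simp only [hC]
  ext M
  simp only [map_add, map_sub, map_smul, smul_eq_mul, map_zero]
  match M with
  | 0 =>
    simp only [coeff_zero_X_mul, mul_zero, add_zero, zero_add, sub_zero, zero_sub]
    rcases Nat.eq_zero_or_pos n with h | h
    · simp [h]
    · rw [coeff_gaussU_of_lt α β γ h, mul_zero, neg_zero]
  | 1 =>
    simp only [coeff_succ_X_mul, coeff_zero_X_mul, mul_zero, add_zero, zero_add, sub_zero,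
      zero_sub, hu1, hu2, PowerSeries.coeff_derivative]
    push_cast
    linear_combination key 0
  | 2 =>
    simp only [coeff_succ_X_mul, coeff_zero_X_mul, mul_zero, add_zero, zero_add, sub_zero,
      zero_sub, hu1, hu2, PowerSeries.coeff_derivative]
    push_cast
    linear_combination key 1
  | (m+3) =>
    simp only [coeff_succ_X_mul, hu1, hu2, PowerSeries.coeff_derivative]
    have k := key (m+2)
    simp only [show (m:ℕ)+2 = m+1+1 from rfl] at k
    push_cast at k
    push_cast
    linear_combination k
end

section
/- Suppose Φ(z) = Σ_{n=0}^∞ d_n u_n(z) with u_n(z) = z^n F^(n)(z) for F = ₂F₁(α,β;γ;z), and Φ satisfies the general Heun equation with parameters (a, q; α, β, γ, δ, ε), γ+δ+ε = α+β+1. Then the coefficients satisfy R_n d_n + Q_{n-1} d_{n-1} + P_{n-2} d_{n-2} = 0 with R_n = a n(n+α-1)(n+β-1), Q_n = a(n+α)(n+β) + (a-1)n(n+ε-1) - γn - q, P_n = (a-1)(n+ε). -/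
open PowerSeries Finset

/-! ### Auxiliary definitions -/

noncomputable def heunS (d : ℕ → ℂ) (k : ℕ) : ℂ :=
  ∑ n ∈ Finset.range (k+1), d n * (k.descFactorial n : ℂ)

noncomputable def heunE (R Q P d : ℕ → ℂ) (m : ℕ) : ℂ :=
  R m * d m + (if 1 ≤ m then Q (m-1) * d (m-1) else 0)
    + (if 2 ≤ m then P (m-2) * d (m-2) else 0)

noncomputable def gcoef (α β γ : ℂ) (k : ℕ) : ℂ :=
  poch α k * poch β k / (poch γ k * (k.factorial : ℂ))

lemma gauss_eq_mk (α β γ : ℂ) : gauss α β γ = PowerSeries.mk (gcoef α β γ) := rfl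

lemma poch_ne_zero_s12 (x : ℂ) (hx : ∀ m : ℕ, x ≠ -(m : ℂ)) (k : ℕ) : poch x k ≠ 0 := by
  rw [poch]
  intro h
  rw [ascPochhammer_eval_eq_zero_iff] at h
  obtain ⟨m, _, hm⟩ := h
  exact hx m (by linear_combination hm)

lemma gcoef_zero (α β γ : ℂ) : gcoef α β γ 0 = 1 := by
  simp [gcoef, poch]

lemma gcoef_ne_zero (α β γ : ℂ) (hγ : ∀ m : ℕ, γ ≠ -(m : ℂ)) (hα : ∀ m : ℕ, α ≠ -(m : ℂ))
    (hβ : ∀ m : ℕ, β ≠ -(m : ℂ)) (k : ℕ) : gcoef α β γ k ≠ 0 := by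
  apply div_ne_zero (mul_ne_zero (poch_ne_zero_s12 α hα k) (poch_ne_zero_s12 β hβ k))
  exact mul_ne_zero (poch_ne_zero_s12 γ hγ k) (Nat.cast_ne_zero.2 k.factorial_ne_zero)

lemma gcoef_rec (α β γ : ℂ) (hγ : ∀ m : ℕ, γ ≠ -(m : ℂ)) (k : ℕ) :
    gcoef α β γ (k+1) * ((γ + (k:ℂ)) * ((k:ℂ)+1))
      = gcoef α β γ k * ((α + (k:ℂ)) * (β + (k:ℂ))) := by
  unfold gcoef poch
  rw [ascPochhammer_succ_eval, ascPochhammer_succ_eval, ascPochhammer_succ_eval,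
    Nat.factorial_succ]
  have h1 : (ascPochhammer ℂ k).eval γ ≠ 0 := poch_ne_zero_s12 γ hγ k
  have h2 : ((k.factorial : ℕ) : ℂ) ≠ 0 := Nat.cast_ne_zero.2 k.factorial_ne_zero
  have h3 : γ + (k:ℂ) ≠ 0 := fun h => hγ k (by linear_combination h)
  have h4 : ((k:ℂ)+1) ≠ 0 := by
    have : (((k+1 : ℕ)) : ℂ) ≠ 0 := Nat.cast_ne_zero.2 (Nat.succ_ne_zero k)
    push_cast at this; exact this
  push_cast
  field_simp

lemma coeff_derivative_iterate (g : ℕ → ℂ) (n m : ℕ) :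
    PowerSeries.coeff m ((fun f => derivative ℂ f)^[n] (PowerSeries.mk g))
      = ((m+n).descFactorial n : ℂ) * g (m+n) := by
  induction n generalizing m with
  | zero => simp
  | succ n ih =>
    rw [Function.iterate_succ_apply', PowerSeries.coeff_derivative, ih (m+1)]
    have h1 : (m + (n+1)).descFactorial (n+1) = (m+1) * ((m + 1 + n).descFactorial n) := by
      have e : m + (n+1) = (m+1) + n := by omega
      rw [e, Nat.descFactorial_succ]
      have e2 : m + 1 + n - n = m + 1 := by omega
      rw [e2]
    rw [h1]
    have e : m + (n+1) = m + 1 + n := by omega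
    rw [e]
    push_cast
    ring

lemma coeff_gaussU_s12 (α β γ : ℂ) (k n : ℕ) (h : n ≤ k) :
    PowerSeries.coeff k (gaussU α β γ n) = (k.descFactorial n : ℂ) * gcoef α β γ k := by
  obtain ⟨m, rfl⟩ : ∃ m, k = m + n := ⟨k - n, by omega⟩
  rw [gaussU, gauss_eq_mk, PowerSeries.coeff_X_pow_mul, coeff_derivative_iterate]

lemma aux_star (a q α β γ δ ε : ℂ) (hfuchs : γ + δ + ε = α + β + 1) (k n : ℕ) (hn : n ≤ k + 1) :
    a*((k:ℂ)+α)*((k:ℂ)+β)*(((k+1).descFactorial n : ℕ):ℂ)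
      + (-(1+a)*(k:ℂ)*((k:ℂ)-1) - (γ*(1+a)+δ*a+ε)*(k:ℂ) - q) * ((k.descFactorial n : ℕ):ℂ)
      + (k:ℂ)*((k:ℂ)+γ-1)*(((k-1).descFactorial n : ℕ):ℂ)
    = (a*(n:ℂ)*((n:ℂ)+α-1)*((n:ℂ)+β-1)) * ((k.descFactorial (n-1) : ℕ):ℂ)
      + (a*((n:ℂ)+α)*((n:ℂ)+β)+(a-1)*(n:ℂ)*((n:ℂ)+ε-1)-γ*(n:ℂ)-q) * ((k.descFactorial n : ℕ):ℂ)
      + ((a-1)*((n:ℂ)+ε)) * ((k.descFactorial (n+1) : ℕ):ℂ) := by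
  have hδ : δ = α + β + 1 - γ - ε := by linear_combination hfuchs
  subst hδ
  rcases n with _ | n'
  · simp only [Nat.zero_add, Nat.descFactorial_zero, Nat.cast_one, Nat.zero_sub,
      Nat.descFactorial_one, Nat.cast_zero]
    ring
  · have hn' : n' ≤ k := by omega
    obtain ⟨j, rfl⟩ : ∃ j, k = n' + j := ⟨k - n', by omega⟩
    rcases j with _ | _ | j
    · simp only [Nat.add_zero]
      have h1 : (n' + 1).descFactorial (n' + 1) = (n' + 1) * n'.descFactorial n' :=
        Nat.succ_descFactorial_succ n' n'
      have h2 : n'.descFactorial (n' + 1) = 0 := by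
        simp [Nat.descFactorial_eq_zero_iff_lt]
      have h3 : n'.descFactorial (n' + 1 + 1) = 0 := by
        simp [Nat.descFactorial_eq_zero_iff_lt]
      have h4 : (n' - 1).descFactorial (n' + 1) = 0 := by
        simp [Nat.descFactorial_eq_zero_iff_lt]
      rw [h1, h2, h3, h4, Nat.add_sub_cancel]
      push_cast
      ring
    · have e1 : n' + (0 + 1) = n' + 1 := by norm_num
      rw [e1]
      have h1 : (n' + 1 + 1).descFactorial (n' + 1) = (n' + 1 + 1) * (n' + 1).descFactorial n' :=
        Nat.succ_descFactorial_succ (n' + 1) n'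
      have h2 : (n' + 1).descFactorial (n' + 1) = 1 * (n' + 1).descFactorial n' := by
        rw [Nat.descFactorial_succ]; congr 1; omega
      have h3 : (n' + 1).descFactorial (n' + 1 + 1) = 0 := by
        simp [Nat.descFactorial_eq_zero_iff_lt]
      have h4 : (n' + 1 - 1).descFactorial (n' + 1) = 0 := by
        simp [Nat.descFactorial_eq_zero_iff_lt]
      rw [h1, h3, h4, Nat.add_sub_cancel, h2]
      push_cast
      ring
    · have e1 : n' + (j + 1 + 1) = n' + (j + 2) := by norm_num
      rw [e1]
      have hs1 : n' + (j + 2) - n' = j + 2 := by omega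
      have hs2 : n' + (j + 2) - (n' + 1) = j + 1 := by omega
      have hs3 : n' + (j + 2) - 1 = n' + (j + 1) := by omega
      have hs4 : n' + (j + 1) - n' = j + 1 := by omega
      have hA1 : (n' + (j + 2) + 1).descFactorial (n' + 1)
          = (n' + (j + 2) + 1) * (n' + (j + 2)).descFactorial n' :=
        Nat.succ_descFactorial_succ _ n'
      have hA2 : (n' + (j + 2)).descFactorial (n' + 1)
          = (j + 2) * (n' + (j + 2)).descFactorial n' := by
        rw [Nat.descFactorial_succ, hs1]
      have hA3 : (n' + (j + 2)).descFactorial (n' + 1 + 1)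
          = (j + 1) * ((j + 2) * (n' + (j + 2)).descFactorial n') := by
        rw [Nat.descFactorial_succ, hA2, hs2]
      have hA4 : (n' + (j + 1)).descFactorial (n' + 1)
          = (j + 1) * (n' + (j + 1)).descFactorial n' := by
        rw [Nat.descFactorial_succ, hs4]
      have key : (n' + (j + 2)) * (n' + (j + 1)).descFactorial n'
          = (j + 2) * (n' + (j + 2)).descFactorial n' := by
        have f1 : (n' + (j + 1) + 1).descFactorial (n' + 1)
            = (n' + (j + 1) + 1) * (n' + (j + 1)).descFactorial n' :=
          Nat.succ_descFactorial_succ _ n'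
        have f2 : n' + (j + 1) + 1 = n' + (j + 2) := by omega
        rw [f2] at f1
        rw [← f1, hA2]
      have keyC : ((n':ℂ) + (j:ℂ) + 2) * (((n' + (j + 1)).descFactorial n' : ℕ):ℂ)
          = ((j:ℂ) + 2) * (((n' + (j + 2)).descFactorial n' : ℕ):ℂ) := by
        exact_mod_cast congrArg (Nat.cast : ℕ → ℂ) key
      rw [hs3, hA1, hA2, hA3, hA4, Nat.add_sub_cancel]
      push_cast
      linear_combination (((n':ℂ)+(j:ℂ)+2+γ-1)*((j:ℂ)+1)) * keyC

lemma aux_KL (a q α β γ δ ε : ℂ) (hfuchs : γ + δ + ε = α + β + 1)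
    (R Q P : ℕ → ℂ)
    (hR : ∀ n : ℕ, R n = a * n * (n + α - 1) * (n + β - 1))
    (hQ : ∀ n : ℕ, Q n = a * (n + α) * (n + β) + (a - 1) * n * (n + ε - 1) - γ * n - q)
    (hP : ∀ n : ℕ, P n = (a - 1) * (n + ε))
    (d : ℕ → ℂ) (k : ℕ) :
    ∑ m ∈ Finset.range (k+2), (k.descFactorial (m-1) : ℂ) * heunE R Q P d m
      = a*((k:ℂ)+α)*((k:ℂ)+β) * heunS d (k+1)
        + (-(1+a)*(k:ℂ)*((k:ℂ)-1) - (γ*(1+a)+δ*a+ε)*(k:ℂ) - q) * heunS d k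
        + (k:ℂ)*((k:ℂ)+γ-1) * heunS d (k-1) := by
  have hA2 : ∑ m ∈ Finset.range (k+2), (k.descFactorial (m-1) : ℂ) *
        (if 1 ≤ m then Q (m-1) * d (m-1) else 0)
      = ∑ n ∈ Finset.range (k+2), (k.descFactorial n : ℂ) * (Q n * d n) := by
    rw [Finset.sum_range_succ' _ (k+1), Finset.sum_range_succ _ (k+1)]
    simp [Nat.descFactorial_eq_zero_iff_lt]
  have hA3 : ∑ m ∈ Finset.range (k+2), (k.descFactorial (m-1) : ℂ) *
        (if 2 ≤ m then P (m-2) * d (m-2) else 0)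
      = ∑ n ∈ Finset.range (k+2), (k.descFactorial (n+1) : ℂ) * (P n * d n) := by
    rw [Finset.sum_range_succ' _ (k+1), Finset.sum_range_succ' _ k,
      Finset.sum_range_succ _ (k+1), Finset.sum_range_succ _ k]
    simp [Nat.descFactorial_eq_zero_iff_lt]
  have hs1 : heunS d (k+1) = ∑ n ∈ Finset.range (k+2), d n * (((k+1).descFactorial n : ℕ):ℂ) := rfl
  have hs2 : heunS d k = ∑ n ∈ Finset.range (k+2), d n * ((k.descFactorial n : ℕ):ℂ) := by
    rw [heunS, Finset.sum_range_succ _ (k+1)]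
    simp [Nat.descFactorial_eq_zero_iff_lt]
  have hs3 : heunS d (k-1) = ∑ n ∈ Finset.range (k+2), d n * (((k-1).descFactorial n : ℕ):ℂ) := by
    rw [heunS]
    apply Finset.sum_subset (Finset.range_subset_range.2 (by omega))
    intro x hx hnx
    simp only [Finset.mem_range] at hx hnx
    rw [Nat.descFactorial_eq_zero_iff_lt.2 (by omega), Nat.cast_zero, mul_zero]
  rw [hs1, hs2, hs3]
  simp only [heunE, mul_add]
  rw [Finset.sum_add_distrib, Finset.sum_add_distrib, hA2, hA3,
    Finset.mul_sum, Finset.mul_sum, Finset.mul_sum,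
    ← Finset.sum_add_distrib, ← Finset.sum_add_distrib,
    ← Finset.sum_add_distrib, ← Finset.sum_add_distrib]
  apply Finset.sum_congr rfl
  intro n hn
  simp only [Finset.mem_range] at hn
  rw [hR, hQ, hP]
  have hst := aux_star a q α β γ δ ε hfuchs k n (by omega)
  linear_combination (-(d n)) * hst

/-- Suppose `Φ = Σ_{n≥0} d_n u_n` (a well-defined formal series since
`u_n` has order `≥ n`) satisfies the general Heun equation with parameters
`(a, q; α, β, γ, δ, ε)`, `γ+δ+ε = α+β+1` (stated with denominators cleared by
`z(z-1)(z-a)`). Then the coefficients satisfy the three-term recurrence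
`R_n d_n + Q_{n-1} d_{n-1} + P_{n-2} d_{n-2} = 0` with `R_n = an(n+α-1)(n+β-1)`,
`Q_n = a(n+α)(n+β) + (a-1)n(n+ε-1) - γn - q`, `P_n = (a-1)(n+ε)`. -/
theorem heun_expansion_gaussU_recurrence
    (a q α β γ δ ε : ℂ) (ha0 : a ≠ 0) (ha1 : a ≠ 1)
    (hfuchs : γ + δ + ε = α + β + 1)
    (hγ : ∀ m : ℕ, γ ≠ -(m : ℂ)) (hα : ∀ m : ℕ, α ≠ -(m : ℂ))
    (hβ : ∀ m : ℕ, β ≠ -(m : ℂ))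
    (d : ℕ → ℂ) (Φ : PowerSeries ℂ)
    (hΦ : Φ = PowerSeries.mk fun k =>
      ∑ n ∈ Finset.range (k + 1), d n * PowerSeries.coeff k (gaussU α β γ n))
    (hheun : X * (X - 1) * (X - C a) * derivative ℂ (derivative ℂ Φ)
      + (C γ * (X - 1) * (X - C a) + C δ * X * (X - C a)
          + C ε * X * (X - 1)) * derivative ℂ Φ
      + (C (α * β) * X - C q) * Φ = 0)
    (R Q P : ℕ → ℂ)
    (hR : ∀ n : ℕ, R n = a * n * (n + α - 1) * (n + β - 1))
    (hQ : ∀ n : ℕ, Q n = a * (n + α) * (n + β) + (a - 1) * n * (n + ε - 1) - γ * n - q)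
    (hP : ∀ n : ℕ, P n = (a - 1) * (n + ε)) :
    R 1 * d 1 + Q 0 * d 0 = 0 ∧
      ∀ n : ℕ, R (n + 2) * d (n + 2) + Q (n + 1) * d (n + 1) + P n * d n = 0 := by
  -- abbreviations
  set Φ₁ := derivative ℂ Φ with hΦ₁
  set Φ₂ := derivative ℂ Φ₁ with hΦ₂
  set f : ℕ → ℂ := gcoef α β γ with hf
  set s : ℕ → ℂ := heunS d with hs
  have hfne : ∀ k, f k ≠ 0 := gcoef_ne_zero α β γ hγ hα hβ
  have hfrec : ∀ k : ℕ, f (k+1) * ((γ + (k:ℂ)) * ((k:ℂ)+1)) = f k * ((α + (k:ℂ)) * (β + (k:ℂ))) :=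
    gcoef_rec α β γ hγ
  -- coefficients of Φ
  have hcs : ∀ k, PowerSeries.coeff k Φ = f k * s k := by
    intro k
    rw [hΦ, coeff_mk]
    calc ∑ n ∈ Finset.range (k+1), d n * PowerSeries.coeff k (gaussU α β γ n)
        = ∑ n ∈ Finset.range (k+1), f k * (d n * (k.descFactorial n : ℂ)) := by
          apply Finset.sum_congr rfl
          intro n hn
          simp only [Finset.mem_range] at hn
          rw [coeff_gaussU_s12 α β γ k n (by omega)]
          ring
      _ = f k * s k := by rw [hs, heunS, ← Finset.mul_sum]
  -- normalized Heun equation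
  have h2 : X*(X*(X*Φ₂)) - X*(X*Φ₂) - C a * (X*(X*Φ₂)) + C a * (X*Φ₂)
      + C γ * (X*(X*Φ₁)) + C δ * (X*(X*Φ₁)) + C ε * (X*(X*Φ₁))
      - C γ * (X*Φ₁) - C γ * (C a * (X*Φ₁)) - C δ * (C a * (X*Φ₁))
      - C ε * (X*Φ₁) + C γ * (C a * Φ₁) + C α * (C β * (X*Φ))
      - C q * Φ = 0 := by
    simp only [map_add, map_mul, map_neg, map_one] at hheun ⊢
    linear_combination hheun
  -- coefficient formulas for the derivatives
  have hd1 : ∀ m : ℕ, PowerSeries.coeff m Φ₁ = ((m:ℂ)+1) * PowerSeries.coeff (m+1) Φ := by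
    intro m; rw [hΦ₁, PowerSeries.coeff_derivative]; ring
  have hd2 : ∀ m : ℕ, PowerSeries.coeff m Φ₂
      = ((m:ℂ)+1) * (((m:ℂ)+2) * PowerSeries.coeff (m+2) Φ) := by
    intro m
    rw [hΦ₂, PowerSeries.coeff_derivative, hd1 (m+1)]
    push_cast
    ring
  -- the `G` recurrence for s
  have hG : ∀ k : ℕ, a*((k:ℂ)+α)*((k:ℂ)+β)*s (k+1)
      + (-(1+a)*(k:ℂ)*((k:ℂ)-1) - (γ*(1+a)+δ*a+ε)*(k:ℂ) - q) * s k
      + (k:ℂ)*((k:ℂ)+γ-1)*s (k-1) = 0 := by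
    intro k
    rcases k with _ | k
    · -- k = 0, from coeff 0 of h2
      have h := congrArg (PowerSeries.coeff 0) h2
      simp only [map_add, map_sub, PowerSeries.coeff_C_mul, PowerSeries.coeff_zero_X_mul,
        map_zero, mul_zero, zero_add, add_zero, zero_sub, sub_zero, neg_zero] at h
      rw [hd1 0, hcs 0, hcs 1] at h
      have hf0 : f 0 = 1 := gcoef_zero α β γ
      have hf1 : f 1 * γ = α * β := by
        have h0 := hfrec 0
        rw [hf0] at h0
        push_cast at h0
        linear_combination h0
      rw [hf0] at h
      push_cast
      linear_combination h - a * s 1 * hf1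
    · -- k+1 : from coeff (k+1) of h2
      have T1 : PowerSeries.coeff (k+1) (X*(X*(X*Φ₂)))
          = ((k:ℂ)-1)*(k:ℂ)*PowerSeries.coeff k Φ := by
        rcases k with _ | _ | k
        · simp [PowerSeries.coeff_succ_X_mul, PowerSeries.coeff_zero_X_mul]
        · norm_num [show (2:ℕ) = 1 + 1 from rfl, PowerSeries.coeff_succ_X_mul,
            PowerSeries.coeff_zero_X_mul]
        · rw [show k+2+1 = (k+1+1)+1 from rfl, PowerSeries.coeff_succ_X_mul,
            PowerSeries.coeff_succ_X_mul, PowerSeries.coeff_succ_X_mul, hd2 k]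
          push_cast
          ring
      have T2 : PowerSeries.coeff (k+1) (X*(X*Φ₂))
          = (k:ℂ)*((k:ℂ)+1)*PowerSeries.coeff (k+1) Φ := by
        rcases k with _ | k
        · simp [PowerSeries.coeff_succ_X_mul, PowerSeries.coeff_zero_X_mul]
        · rw [show k+1+1 = (k+1)+1 from rfl, PowerSeries.coeff_succ_X_mul,
            PowerSeries.coeff_succ_X_mul, hd2 k]
          push_cast
          ring
      have T3 : PowerSeries.coeff (k+1) (X*Φ₂)
          = ((k:ℂ)+1)*((k:ℂ)+2)*PowerSeries.coeff (k+2) Φ := by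
        rw [PowerSeries.coeff_succ_X_mul, hd2 k]
        ring
      have T4 : PowerSeries.coeff (k+1) (X*(X*Φ₁)) = (k:ℂ)*PowerSeries.coeff k Φ := by
        rcases k with _ | k
        · simp [PowerSeries.coeff_succ_X_mul, PowerSeries.coeff_zero_X_mul]
        · rw [show k+1+1 = (k+1)+1 from rfl, PowerSeries.coeff_succ_X_mul,
            PowerSeries.coeff_succ_X_mul, hd1 k]
          push_cast
          ring
      have T5 : PowerSeries.coeff (k+1) (X*Φ₁)
          = ((k:ℂ)+1)*PowerSeries.coeff (k+1) Φ := by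
        rw [PowerSeries.coeff_succ_X_mul, hd1 k]
      have T6 : PowerSeries.coeff (k+1) Φ₁ = ((k:ℂ)+2)*PowerSeries.coeff (k+2) Φ := by
        rw [hd1 (k+1)]
        push_cast
        ring
      have T7 : PowerSeries.coeff (k+1) (X*Φ) = PowerSeries.coeff k Φ :=
        PowerSeries.coeff_succ_X_mul k Φ
      have h := congrArg (PowerSeries.coeff (k+1)) h2
      simp only [map_add, map_sub, PowerSeries.coeff_C_mul, map_zero] at h
      rw [T1, T2, T3, T4, T5, T6, T7, hcs k, hcs (k+1), hcs (k+2)] at h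
      have hr1 := hfrec (k+1)
      have hr0 := hfrec k
      push_cast at hr1 hr0
      rw [Nat.add_sub_cancel]
      refine mul_left_cancel₀ (hfne (k+1)) ?_
      push_cast
      linear_combination h - a * s (k+2) * hr1 + s k * hr0 - (k:ℂ) * f k * s k * hfuchs
  -- the weighted-sum identity
  have hKL : ∀ k : ℕ, ∑ m ∈ Finset.range (k+2),
      (k.descFactorial (m-1) : ℂ) * heunE R Q P d m = 0 := by
    intro k
    rw [aux_KL a q α β γ δ ε hfuchs R Q P hR hQ hP d k]
    exact hG k
  -- all e m vanish
  have heq0 : ∀ m, heunE R Q P d m = 0 := by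
    intro m
    induction m using Nat.strong_induction_on with
    | _ m ih =>
      rcases m with _ | m
      · simp [heunE, hR]
      · have h := hKL m
        rw [Finset.sum_range_succ] at h
        have hz : ∑ i ∈ Finset.range (m+1), (m.descFactorial (i-1) : ℂ) * heunE R Q P d i = 0 :=
          Finset.sum_eq_zero fun i hi => by
            rw [ih i (by simp only [Finset.mem_range] at hi; omega), mul_zero]
        rw [hz, zero_add, Nat.add_sub_cancel, Nat.descFactorial_self] at h
        have hfacne : ((m.factorial : ℕ) : ℂ) ≠ 0 := Nat.cast_ne_zero.2 m.factorial_ne_zero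
        exact (mul_eq_zero.1 h).resolve_left hfacne
  constructor
  · have h := heq0 1
    simp only [heunE] at h
    norm_num at h
    linear_combination h
  · intro n
    have h := heq0 (n+2)
    simp only [heunE] at h
    norm_num at h
    linear_combination h
end

section
/- Suppose Φ(z) = Σ_{n=0}^∞ d_n u_n(z) with u_n(z) = z^n F^(n)(z) for F = ₁F₁(α;γ;-εz), and Φ satisfies the single-confluent Heun equation with parameters (q; α, γ, δ, ε). Then R_n d_n + Q_{n-1} d_{n-1} + P_{n-2} d_{n-2} = 0 with R_n = εn(n+α-1), Q_n = n(n+ε+γ+δ-1) + εα - q, P_n = n+δ. -/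
open PowerSeries Finset


/-- The Kummer series `₁F₁(α; γ; -εz)` as a formal power series in `z`. -/
noncomputable def kummerNeg (α γ ε : ℂ) : PowerSeries ℂ :=
  PowerSeries.mk fun k => poch α k * (-ε) ^ k / (poch γ k * (k.factorial : ℂ))

/-- `u_n(z) = z^n (dⁿ/dzⁿ) ₁F₁(α; γ; -εz)` as a formal power series. -/
noncomputable def kummerU (α γ ε : ℂ) (n : ℕ) : PowerSeries ℂ :=
  X ^ n * (fun f => derivative ℂ f)^[n] (kummerNeg α γ ε)

namespace CHEaux


/-- cast of `descFactorial_succ` valid for all `k n`. -/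
lemma r1 (k n : ℕ) : ((k.descFactorial (n+1) : ℕ) : ℂ) = ((k:ℂ) - n) * (k.descFactorial n : ℂ) := by
  by_cases h : n ≤ k
  · rw [Nat.descFactorial_succ, Nat.cast_mul, Nat.cast_sub h]
  · push_neg at h
    rw [Nat.descFactorial_eq_zero_iff_lt.2 (by omega),
      Nat.descFactorial_eq_zero_iff_lt.2 (by omega)]
    simp

lemma r2 (k n : ℕ) : (((k+1).descFactorial (n+1) : ℕ) : ℂ)
    = ((k:ℂ) + 1) * (k.descFactorial n : ℂ) := by
  rw [Nat.succ_descFactorial_succ]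
  push_cast
  ring

/-- `(k+1-n) f(k+1,n) = (k+1) f(k,n)` -/
lemma r4 (k n : ℕ) : ((k:ℂ) + 1 - n) * ((k+1).descFactorial n : ℂ)
    = ((k:ℂ) + 1) * (k.descFactorial n : ℂ) := by
  cases n with
  | zero => simp
  | succ m =>
      rw [r2, r1]
      push_cast
      ring

/-- `k * f(k-1,m+1) = (k-m-1)(k-m) f(k,m)` (`k-1` is ℕ subtraction). -/
lemma r3 (k m : ℕ) : (k:ℂ) * (((k-1).descFactorial (m+1) : ℕ) : ℂ)
    = ((k:ℂ) - m - 1) * (((k:ℂ) - m) * (k.descFactorial m : ℂ)) := by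
  cases k with
  | zero =>
      cases m with
      | zero => simp
      | succ i =>
          simp [Nat.zero_descFactorial_succ]
  | succ j =>
      have h4' := r4 j m
      have h1 : ((j+1:ℕ) - 1 : ℕ) = j := rfl
      rw [h1, r1]
      push_cast at h4' ⊢
      linear_combination ((m:ℂ) - (j:ℂ)) * h4'


/-- The key per-coefficient identity `L[u_n] = R_n u_{n-1} + Q_n u_n + P_n u_{n+1}` at `z^k`. -/
lemma keyI (q α γ δ ε : ℂ) (k n : ℕ) :
    ε*(α+(k:ℂ)) * ((k+1).descFactorial n : ℂ)
      + ((k:ℂ)*((k:ℂ)-1)+(γ+δ-ε)*(k:ℂ) - q) * (k.descFactorial n : ℂ)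
      - (k:ℂ)*(γ+(k:ℂ)-1) * ((k-1).descFactorial n : ℂ)
    = (ε*(n:ℂ)*((n:ℂ)+α-1)) * (k.descFactorial (n-1) : ℂ)
      + ((n:ℂ)*((n:ℂ)+ε+γ+δ-1)+ε*α-q) * (k.descFactorial n : ℂ)
      + ((n:ℂ)+δ) * (k.descFactorial (n+1) : ℂ) := by
  cases n with
  | zero =>
      push_cast [Nat.descFactorial_zero, Nat.descFactorial_one, Nat.zero_sub]
      ring
  | succ m =>
      have e1 : (((k+1).descFactorial (m+1) : ℕ) : ℂ)
          = ((k:ℂ) + 1) * (k.descFactorial m : ℂ) := r2 k m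
      have e2 : ((k.descFactorial (m+1) : ℕ) : ℂ)
          = ((k:ℂ) - m) * (k.descFactorial m : ℂ) := r1 k m
      have e3 : (k:ℂ) * (((k-1).descFactorial (m+1) : ℕ) : ℂ)
          = ((k:ℂ) - m - 1) * (((k:ℂ) - m) * (k.descFactorial m : ℂ)) := r3 k m
      have e4 : ((k.descFactorial (m+2) : ℕ) : ℂ)
          = ((k:ℂ) - (m+1)) * (((k:ℂ) - m) * (k.descFactorial m : ℂ)) := by
        rw [r1 k (m+1), r1 k m]; push_cast; ring
      have e5 : (m + 1 - 1 : ℕ) = m := rfl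
      rw [e5, e1, e2, e4]
      push_cast
      linear_combination (-(γ+(k:ℂ)-1)) * e3
      
/-- coefficient of iterated derivative. -/
lemma coeff_iter_deriv (f : PowerSeries ℂ) (n m : ℕ) :
    PowerSeries.coeff m ((fun g => PowerSeries.derivative ℂ g)^[n] f)
      = (((m+n).descFactorial n : ℕ) : ℂ) * PowerSeries.coeff (m+n) f := by
  induction n generalizing m with
  | zero => simp
  | succ n ih =>
      rw [Function.iterate_succ_apply', PowerSeries.coeff_derivative, ih (m+1)]
      have h1 : m + 1 + n = m + (n+1) := by omega
      have h2 : (m + (n+1)).descFactorial (n+1) = (m+1) * ((m+1+n).descFactorial n) := by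
        rw [show m + (n+1) = (m + n) + 1 from by omega, Nat.descFactorial_succ]
        congr 1
        · omega
        · congr 1; omega
      rw [h1, h2]
      push_cast
      ring


lemma coeff_kummerU (α γ ε : ℂ) (n k : ℕ) :
    PowerSeries.coeff k (kummerU α γ ε n)
      = ((k.descFactorial n : ℕ) : ℂ) * PowerSeries.coeff k (kummerNeg α γ ε) := by
  rw [kummerU, PowerSeries.coeff_X_pow_mul']
  by_cases h : n ≤ k
  · rw [if_pos h, coeff_iter_deriv, Nat.sub_add_cancel h]
  · rw [if_neg h, Nat.descFactorial_eq_zero_iff_lt.2 (by omega)]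
    simp

lemma poch_ne_zero {x : ℂ} (hx : ∀ m : ℕ, x ≠ -(m : ℂ)) (k : ℕ) : poch x k ≠ 0 := by
  rw [poch]
  intro h
  rw [ascPochhammer_eval_eq_zero_iff] at h
  obtain ⟨j, _, hj⟩ := h
  exact hx j (by linear_combination hj)

lemma coeff_kummerNeg (α γ ε : ℂ) (k : ℕ) :
    PowerSeries.coeff k (kummerNeg α γ ε)
      = poch α k * (-ε) ^ k / (poch γ k * (k.factorial : ℂ)) := by
  rw [kummerNeg, PowerSeries.coeff_mk]

lemma coeff_kummerNeg_ne_zero {α γ ε : ℂ} (hε : ε ≠ 0)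
    (hγ : ∀ m : ℕ, γ ≠ -(m : ℂ)) (hα : ∀ m : ℕ, α ≠ -(m : ℂ)) (k : ℕ) :
    PowerSeries.coeff k (kummerNeg α γ ε) ≠ 0 := by
  rw [coeff_kummerNeg]
  apply div_ne_zero
  · exact mul_ne_zero (poch_ne_zero hα k) (pow_ne_zero _ (neg_ne_zero.2 hε))
  · exact mul_ne_zero (poch_ne_zero hγ k) (Nat.cast_ne_zero.2 (Nat.factorial_ne_zero k))

lemma poch_succ (x : ℂ) (k : ℕ) : poch x (k+1) = poch x k * (x + k) := by
  rw [poch, poch, ascPochhammer_succ_eval]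

/-- Ratio: `A (k+1) * ((γ+k)(k+1)) = A k * ((α+k)(-ε))`. -/
lemma ratioA {α γ ε : ℂ} (hγ : ∀ m : ℕ, γ ≠ -(m : ℂ)) (k : ℕ) :
    PowerSeries.coeff (k+1) (kummerNeg α γ ε) * ((γ + k) * ((k:ℂ)+1))
      = PowerSeries.coeff k (kummerNeg α γ ε) * ((α + k) * (-ε)) := by
  have h1 : poch γ k ≠ 0 := poch_ne_zero hγ k
  have h2 : ((k.factorial : ℕ) : ℂ) ≠ 0 := Nat.cast_ne_zero.2 (Nat.factorial_ne_zero k)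
  have h3 : (γ + (k:ℂ)) ≠ 0 := by
    intro h; exact hγ k (by linear_combination h)
  have h4 : (((k+1).factorial : ℕ) : ℂ) ≠ 0 := Nat.cast_ne_zero.2 (Nat.factorial_ne_zero _)
  rw [coeff_kummerNeg, coeff_kummerNeg, poch_succ α, poch_succ γ,
    div_mul_eq_mul_div, div_mul_eq_mul_div,
    div_eq_div_iff (mul_ne_zero (mul_ne_zero h1 h3) h4) (mul_ne_zero h1 h2)]
  rw [Nat.factorial_succ]
  push_cast
  ring


/-- partial sums `S_k = Σ_{n≤k} d_n k!/(k-n)!`. -/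
noncomputable def Sg (d : ℕ → ℂ) (k : ℕ) : ℂ :=
  ∑ n ∈ Finset.range (k+1), d n * ((k.descFactorial n : ℕ) : ℂ)

/-- the three-term combinations `G_m`. -/
noncomputable def Gc (q α γ δ ε : ℂ) (d : ℕ → ℂ) : ℕ → ℂ
  | 0 => ε*α * d 1 + (ε*α - q) * d 0
  | (m+1) => ε*((m:ℂ)+2)*((m:ℂ)+1+α) * d (m+2)
      + (((m:ℂ)+1)*((m:ℂ)+ε+γ+δ)+ε*α-q) * d (m+1) + ((m:ℂ)+δ) * d m

lemma sumId (q α γ δ ε : ℂ) (d : ℕ → ℂ) (k : ℕ) :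
    ε*(α+(k:ℂ)) * Sg d (k+1) + ((k:ℂ)*((k:ℂ)-1)+(γ+δ-ε)*(k:ℂ) - q) * Sg d k
      - (k:ℂ)*(γ+(k:ℂ)-1) * Sg d (k-1)
    = ∑ m ∈ Finset.range (k+1), Gc q α γ δ ε d m * ((k.descFactorial m : ℕ) : ℂ) := by
  cases k with
  | zero =>
      simp [Sg, Gc, Finset.sum_range_succ]
      ring
  | succ j =>
      have hz1 : ((j+1).descFactorial (j+2) : ℕ) = 0 :=
        Nat.descFactorial_eq_zero_iff_lt.2 (by omega)
      have hz2 : (j.descFactorial (j+1) : ℕ) = 0 :=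
        Nat.descFactorial_eq_zero_iff_lt.2 (by omega)
      have hz3 : (j.descFactorial (j+2) : ℕ) = 0 :=
        Nat.descFactorial_eq_zero_iff_lt.2 (by omega)
      have hz4 : ((j+1).descFactorial (j+3) : ℕ) = 0 :=
        Nat.descFactorial_eq_zero_iff_lt.2 (by omega)
      have hsucc : (j + 1 - 1 : ℕ) = j := rfl
      rw [hsucc]
      -- extend the three `Sg` sums to a common range `range (j+3)`
      have ext2 : Sg d (j+1) = ∑ n ∈ Finset.range (j+3), d n * (((j+1).descFactorial n : ℕ) : ℂ) := by
        rw [Sg, Finset.sum_range_succ (n := j+2), hz1]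
        simp
      have ext3 : Sg d j = ∑ n ∈ Finset.range (j+3), d n * ((j.descFactorial n : ℕ) : ℂ) := by
        rw [Sg, Finset.sum_range_succ (n := j+2), Finset.sum_range_succ (n := j+1), hz2, hz3]
        simp
      have hL : ε*(α+((j+1:ℕ):ℂ)) * Sg d (j+2)
            + (((j+1:ℕ):ℂ)*(((j+1:ℕ):ℂ)-1)+(γ+δ-ε)*((j+1:ℕ):ℂ) - q) * Sg d (j+1)
            - ((j+1:ℕ):ℂ)*(γ+((j+1:ℕ):ℂ)-1) * Sg d j
          = ∑ n ∈ Finset.range (j+3), d n *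
              (ε*(α+((j+1:ℕ):ℂ)) * (((j+2).descFactorial n : ℕ) : ℂ)
                + (((j+1:ℕ):ℂ)*(((j+1:ℕ):ℂ)-1)+(γ+δ-ε)*((j+1:ℕ):ℂ) - q)
                    * (((j+1).descFactorial n : ℕ) : ℂ)
                - ((j+1:ℕ):ℂ)*(γ+((j+1:ℕ):ℂ)-1) * ((j.descFactorial n : ℕ) : ℂ)) := by
        rw [Sg, ext2, ext3, Finset.mul_sum, Finset.mul_sum, Finset.mul_sum,
          ← Finset.sum_add_distrib, ← Finset.sum_sub_distrib]
        refine Finset.sum_congr rfl fun n _ => by ring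
      rw [hL]
      -- rewrite each summand via the key identity
      have hK : ∀ n ∈ Finset.range (j+3), d n *
              (ε*(α+((j+1:ℕ):ℂ)) * (((j+2).descFactorial n : ℕ) : ℂ)
                + (((j+1:ℕ):ℂ)*(((j+1:ℕ):ℂ)-1)+(γ+δ-ε)*((j+1:ℕ):ℂ) - q)
                    * (((j+1).descFactorial n : ℕ) : ℂ)
                - ((j+1:ℕ):ℂ)*(γ+((j+1:ℕ):ℂ)-1) * ((j.descFactorial n : ℕ) : ℂ))
          = d n * ((ε*(n:ℂ)*((n:ℂ)+α-1)) * (((j+1).descFactorial (n-1) : ℕ) : ℂ)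
              + ((n:ℂ)*((n:ℂ)+ε+γ+δ-1)+ε*α-q) * (((j+1).descFactorial n : ℕ) : ℂ)
              + ((n:ℂ)+δ) * (((j+1).descFactorial (n+1) : ℕ) : ℂ)) := by
        intro n _
        have hk := keyI q α γ δ ε (j+1) n
        have h1 : (j + 1 - 1 : ℕ) = j := rfl
        rw [h1] at hk
        push_cast at hk ⊢
        linear_combination (d n) * hk
      rw [Finset.sum_congr rfl hK]
      -- split the sum into three sums
      have hsplit : ∑ n ∈ Finset.range (j+3),
            d n * (ε * (n:ℂ) * ((n:ℂ) + α - 1) * (((j+1).descFactorial (n-1) : ℕ) : ℂ)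
              + ((n:ℂ) * ((n:ℂ)+ε+γ+δ-1) + ε*α - q) * (((j+1).descFactorial n : ℕ) : ℂ)
              + ((n:ℂ)+δ) * (((j+1).descFactorial (n+1) : ℕ) : ℂ))
          = (∑ n ∈ Finset.range (j+3),
              d n * (ε * (n:ℂ) * ((n:ℂ) + α - 1) * (((j+1).descFactorial (n-1) : ℕ) : ℂ)))
            + (∑ n ∈ Finset.range (j+3),
              d n * (((n:ℂ) * ((n:ℂ)+ε+γ+δ-1) + ε*α - q) * (((j+1).descFactorial n : ℕ) : ℂ)))
            + (∑ n ∈ Finset.range (j+3),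
              d n * (((n:ℂ)+δ) * (((j+1).descFactorial (n+1) : ℕ) : ℂ))) := by
        rw [← Finset.sum_add_distrib, ← Finset.sum_add_distrib]
        exact Finset.sum_congr rfl fun n _ => by ring
      rw [hsplit]
      -- sum A
      have hA : (∑ n ∈ Finset.range (j+3),
            d n * (ε * (n:ℂ) * ((n:ℂ) + α - 1) * (((j+1).descFactorial (n-1) : ℕ) : ℂ)))
          = (∑ i ∈ Finset.range (j+1),
              d (i+2) * (ε*((i:ℂ)+2)*((i:ℂ)+1+α) * (((j+1).descFactorial (i+1) : ℕ) : ℂ)))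
            + ε*α * d 1 * (((j+1).descFactorial 0 : ℕ) : ℂ) := by
        rw [Finset.sum_range_succ' (n := j+2)]
        rw [Finset.sum_congr rfl (fun i _ => by
            rw [Nat.add_sub_cancel]; push_cast; ring :
          ∀ i ∈ Finset.range (j+2),
            d (i+1) * (ε * ((i+1:ℕ):ℂ) * (((i+1:ℕ):ℂ) + α - 1)
                * (((j+1).descFactorial (i+1-1) : ℕ) : ℂ))
            = d (i+1) * (ε*((i:ℂ)+1)*((i:ℂ)+α) * (((j+1).descFactorial i : ℕ) : ℂ)))]
        rw [Finset.sum_range_succ' (n := j+1)]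
        rw [Finset.sum_congr rfl (fun i _ => by push_cast; ring :
          ∀ i ∈ Finset.range (j+1),
            d (i+1+1) * (ε*(((i+1:ℕ):ℂ)+1)*(((i+1:ℕ):ℂ)+α) * (((j+1).descFactorial (i+1) : ℕ) : ℂ))
            = d (i+2) * (ε*((i:ℂ)+2)*((i:ℂ)+1+α) * (((j+1).descFactorial (i+1) : ℕ) : ℂ)))]
        push_cast
        ring
      -- sum B
      have hB : (∑ n ∈ Finset.range (j+3),
            d n * (((n:ℂ) * ((n:ℂ)+ε+γ+δ-1) + ε*α - q) * (((j+1).descFactorial n : ℕ) : ℂ)))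
          = (∑ i ∈ Finset.range (j+1),
              d (i+1) * ((((i:ℂ)+1)*((i:ℂ)+ε+γ+δ)+ε*α-q) * (((j+1).descFactorial (i+1) : ℕ) : ℂ)))
            + (ε*α - q) * d 0 * (((j+1).descFactorial 0 : ℕ) : ℂ) := by
        rw [Finset.sum_range_succ (n := j+2), hz1]
        rw [Finset.sum_range_succ' (n := j+1)]
        rw [Finset.sum_congr rfl (fun i _ => by push_cast; ring :
          ∀ i ∈ Finset.range (j+1),
            d (i+1) * ((((i+1:ℕ):ℂ) * (((i+1:ℕ):ℂ)+ε+γ+δ-1) + ε*α - q)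
                * (((j+1).descFactorial (i+1) : ℕ) : ℂ))
            = d (i+1) * ((((i:ℂ)+1)*((i:ℂ)+ε+γ+δ)+ε*α-q) * (((j+1).descFactorial (i+1) : ℕ) : ℂ)))]
        push_cast
        ring
      -- sum C
      have hC : (∑ n ∈ Finset.range (j+3),
            d n * (((n:ℂ)+δ) * (((j+1).descFactorial (n+1) : ℕ) : ℂ)))
          = (∑ i ∈ Finset.range (j+1),
              d i * (((i:ℂ)+δ) * (((j+1).descFactorial (i+1) : ℕ) : ℂ))) := by
        rw [Finset.sum_range_succ (n := j+2), hz4, Finset.sum_range_succ (n := j+1), hz1]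
        push_cast
        ring
      rw [hA, hB, hC]
      -- RHS
      have hRHS : (∑ m ∈ Finset.range (j+2), Gc q α γ δ ε d m * (((j+1).descFactorial m : ℕ) : ℂ))
          = ((∑ i ∈ Finset.range (j+1),
              d (i+2) * (ε*((i:ℂ)+2)*((i:ℂ)+1+α) * (((j+1).descFactorial (i+1) : ℕ) : ℂ)))
            + (∑ i ∈ Finset.range (j+1),
              d (i+1) * ((((i:ℂ)+1)*((i:ℂ)+ε+γ+δ)+ε*α-q) * (((j+1).descFactorial (i+1) : ℕ) : ℂ)))
            + (∑ i ∈ Finset.range (j+1),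
              d i * (((i:ℂ)+δ) * (((j+1).descFactorial (i+1) : ℕ) : ℂ))))
            + (ε*α * d 1 + (ε*α - q) * d 0) * (((j+1).descFactorial 0 : ℕ) : ℂ) := by
        rw [Finset.sum_range_succ' (n := j+1)]
        simp only [Gc]
        rw [← Finset.sum_add_distrib, ← Finset.sum_add_distrib]
        rw [Finset.sum_congr rfl (fun i _ => by ring :
          ∀ i ∈ Finset.range (j+1),
            (ε*((i:ℂ)+2)*((i:ℂ)+1+α) * d (i+2)
              + (((i:ℂ)+1)*((i:ℂ)+ε+γ+δ)+ε*α-q) * d (i+1) + ((i:ℂ)+δ) * d i)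
              * (((j+1).descFactorial (i+1) : ℕ) : ℂ)
            = d (i+2) * (ε*((i:ℂ)+2)*((i:ℂ)+1+α) * (((j+1).descFactorial (i+1) : ℕ) : ℂ))
              + d (i+1) * ((((i:ℂ)+1)*((i:ℂ)+ε+γ+δ)+ε*α-q) * (((j+1).descFactorial (i+1) : ℕ) : ℂ))
              + d i * (((i:ℂ)+δ) * (((j+1).descFactorial (i+1) : ℕ) : ℂ)))]
      rw [hRHS]
      ring

end CHEaux

/-- Suppose `Φ = Σ_{n≥0} d_n u_n` (a well-defined formal series since
`u_n` has order `≥ n`) satisfies the single-confluent Heun equation with parameters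
`(q; α, γ, δ, ε)` (stated with denominators cleared by `z(z-1)`). Then
`R_n d_n + Q_{n-1} d_{n-1} + P_{n-2} d_{n-2} = 0` with `R_n = εn(n+α-1)`,
`Q_n = n(n+ε+γ+δ-1) + εα - q`, `P_n = n+δ`. -/
theorem confluent_heun_expansion_kummerU_recurrence
    (q α γ δ ε : ℂ) (hε : ε ≠ 0)
    (hγ : ∀ m : ℕ, γ ≠ -(m : ℂ)) (hα : ∀ m : ℕ, α ≠ -(m : ℂ))
    (d : ℕ → ℂ) (Φ : PowerSeries ℂ)
    (hΦ : Φ = PowerSeries.mk fun k =>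
      ∑ n ∈ Finset.range (k + 1), d n * PowerSeries.coeff k (kummerU α γ ε n))
    (hheun : X * (X - 1) * derivative ℂ (derivative ℂ Φ)
      + (C ε * X * (X - 1) + C γ * (X - 1) + C δ * X) * derivative ℂ Φ
      + (C (ε * α) * X - C q) * Φ = 0)
    (R Q P : ℕ → ℂ)
    (hR : ∀ n : ℕ, R n = ε * n * (n + α - 1))
    (hQ : ∀ n : ℕ, Q n = n * (n + ε + γ + δ - 1) + ε * α - q)
    (hP : ∀ n : ℕ, P n = n + δ) :
    R 1 * d 1 + Q 0 * d 0 = 0 ∧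
      ∀ n : ℕ, R (n + 2) * d (n + 2) + Q (n + 1) * d (n + 1) + P n * d n = 0 := by
  have hA : ∀ k : ℕ, PowerSeries.coeff k (kummerNeg α γ ε) ≠ 0 :=
    CHEaux.coeff_kummerNeg_ne_zero hε hγ hα
  have hc : ∀ k : ℕ, PowerSeries.coeff k Φ
      = CHEaux.Sg d k * PowerSeries.coeff k (kummerNeg α γ ε) := by
    intro k
    rw [hΦ, PowerSeries.coeff_mk, CHEaux.Sg, Finset.sum_mul]
    exact Finset.sum_congr rfl fun n _ => by rw [CHEaux.coeff_kummerU]; ring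
  have heq : X * (X * derivative ℂ (derivative ℂ Φ)) - X * derivative ℂ (derivative ℂ Φ)
      + (C ε) * (X * (X * derivative ℂ Φ)) - (C ε) * (X * derivative ℂ Φ)
      + (C γ) * (X * derivative ℂ Φ) - (C γ) * derivative ℂ Φ
      + (C δ) * (X * derivative ℂ Φ)
      + (C (ε*α)) * (X * Φ) - (C q) * Φ = 0 := by
    rw [← hheun]; ring
  have hmaster : ∀ k : ℕ, ∑ m ∈ Finset.range (k+1),
      CHEaux.Gc q α γ δ ε d m * ((k.descFactorial m : ℕ) : ℂ) = 0 := by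
    intro k
    cases k with
    | zero =>
        have h0 := congrArg (PowerSeries.coeff 0) heq
        simp only [map_sub, map_add, map_zero, PowerSeries.coeff_C_mul,
          PowerSeries.coeff_zero_X_mul, PowerSeries.coeff_derivative, hc] at h0
        have hr0 := CHEaux.ratioA (α := α) (ε := ε) hγ 0
        have hA0 : PowerSeries.coeff 0 (kummerNeg α γ ε) = 1 := by
          rw [CHEaux.coeff_kummerNeg]
          simp [poch]
        have hS0 : CHEaux.Sg d 0 = d 0 := by simp [CHEaux.Sg]
        have hS1 : CHEaux.Sg d (0+1) = d 0 + d 1 := by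
          simp [CHEaux.Sg, Finset.sum_range_succ]
        rw [hA0, hS0, hS1] at h0
        rw [hA0] at hr0
        simp only [zero_add, Finset.sum_range_one, Nat.descFactorial_zero, Nat.cast_one, mul_one]
        simp only [CHEaux.Gc]
        push_cast at h0 hr0 ⊢
        linear_combination h0 + (d 0 + d 1) * hr0
    | succ j =>
        simp only [Nat.add_assoc, Nat.reduceAdd]
        have hs := CHEaux.sumId q α γ δ ε d (j+1)
        rw [Nat.add_sub_cancel] at hs
        simp only [Nat.add_assoc, Nat.reduceAdd] at hs
        have hr1 := CHEaux.ratioA (α := α) (ε := ε) hγ (j+1)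
        have hr2 := CHEaux.ratioA (α := α) (ε := ε) hγ j
        have hBA : (ε*(α+((j+1:ℕ):ℂ)) * CHEaux.Sg d (j+2)
            + (((j+1:ℕ):ℂ)*(((j+1:ℕ):ℂ)-1)+(γ+δ-ε)*((j+1:ℕ):ℂ) - q) * CHEaux.Sg d (j+1)
            - ((j+1:ℕ):ℂ)*(γ+((j+1:ℕ):ℂ)-1) * CHEaux.Sg d j)
            * PowerSeries.coeff (j+1) (kummerNeg α γ ε) = 0 := by
          cases j with
          | zero =>
              have h1 := congrArg (PowerSeries.coeff (0+1)) heq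
              simp only [map_sub, map_add, map_zero, PowerSeries.coeff_C_mul,
                PowerSeries.coeff_zero_X_mul, PowerSeries.coeff_succ_X_mul,
                PowerSeries.coeff_derivative, hc] at h1
              simp only [Nat.add_assoc, Nat.reduceAdd, Nat.zero_add] at h1 hr1 hr2 ⊢
              push_cast at h1 hr1 hr2 ⊢
              linear_combination CHEaux.Sg d 2 * hr1 - CHEaux.Sg d 0 * hr2 + h1
          | succ i =>
              have h2 := congrArg (PowerSeries.coeff (i+1+1)) heq
              simp only [map_sub, map_add, map_zero, PowerSeries.coeff_C_mul,
                PowerSeries.coeff_zero_X_mul, PowerSeries.coeff_succ_X_mul,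
                PowerSeries.coeff_derivative, hc] at h2
              simp only [Nat.add_assoc, Nat.reduceAdd] at h2 hr1 hr2 ⊢
              push_cast at h2 hr1 hr2 ⊢
              linear_combination CHEaux.Sg d (i+3) * hr1 - CHEaux.Sg d (i+1) * hr2 + h2
        have hB := (mul_eq_zero.1 hBA).resolve_right (hA (j+1))
        rw [← hs]
        linear_combination hB
  have hGzero : ∀ m : ℕ, CHEaux.Gc q α γ δ ε d m = 0 := by
    intro m
    induction m using Nat.strong_induction_on with
    | _ m ih =>
      have hm := hmaster m
      rw [Finset.sum_range_succ, Finset.sum_eq_zero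
        (fun i hi => by rw [ih i (Finset.mem_range.1 hi)]; ring), zero_add,
        Nat.descFactorial_self] at hm
      exact (mul_eq_zero.1 hm).resolve_right
        (Nat.cast_ne_zero.2 (Nat.factorial_ne_zero m))
  constructor
  · have h := hGzero 0
    simp only [CHEaux.Gc] at h
    rw [hR 1, hQ 0]
    push_cast
    linear_combination h
  · intro n
    have h := hGzero (n+1)
    simp only [CHEaux.Gc] at h
    rw [hR (n+2), hQ (n+1), hP n]
    push_cast
    linear_combination h
end

section
/- With recurrence coefficients R_n = εn(n+α-1), Q_n = n(n+ε+γ+δ-1) + εα - q, P_n = n+δ and d₀ = 1, the finite-sum termination conditions for N = 1 are: δ = -1 and (q-εα)² - (ε+γ-1)(q-εα) + εα = 0. That is, if δ = -1 and q satisfies this quadratic, and d₁ = -Q₀/R₁ = (q-εα)/(εα), then P₁ = 0 and Q₁ d₁ + P₀ d₀ = 0, so d_n = 0 for all n ≥ 2. -/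
/-- For the single-confluent Heun recurrence with
`R_n = εn(n+α-1)`, `Q_n = n(n+ε+γ+δ-1) + εα - q`, `P_n = n+δ`, `d₀ = 1` and
`d₁ = -Q₀/R₁ = (q-εα)/(εα)`: if `δ = -1` and `q` satisfies the quadratic
`(q-εα)² - (ε+γ-1)(q-εα) + εα = 0`, then `P₁ = 0` and `Q₁d₁ + P₀d₀ = 0`, and hence
`d_n = 0` for all `n ≥ 2`. -/
theorem confluent_heun_N1_termination
    (q α γ δ ε : ℂ) (hε : ε ≠ 0) (hα : α ≠ 0)
    (R Q P d : ℕ → ℂ)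
    (hR : ∀ n : ℕ, R n = ε * n * (n + α - 1))
    (hQ : ∀ n : ℕ, Q n = n * (n + ε + γ + δ - 1) + ε * α - q)
    (hP : ∀ n : ℕ, P n = n + δ)
    (hRne : ∀ n : ℕ, 1 ≤ n → R n ≠ 0)
    (hδ : δ = -1)
    (hquad : (q - ε * α) ^ 2 - (ε + γ - 1) * (q - ε * α) + ε * α = 0)
    (hd0 : d 0 = 1) (hd1 : d 1 = (q - ε * α) / (ε * α))
    (hrec : ∀ n : ℕ, 2 ≤ n →
      R n * d n + Q (n - 1) * d (n - 1) + P (n - 2) * d (n - 2) = 0) :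
    P 1 = 0 ∧ Q 1 * d 1 + P 0 * d 0 = 0 ∧ ∀ n : ℕ, 2 ≤ n → d n = 0 := by
  have hεα : ε * α ≠ 0 := mul_ne_zero hε hα
  have hP1 : P 1 = 0 := by rw [hP, hδ]; push_cast; ring
  have hQd : Q 1 * d 1 + P 0 * d 0 = 0 := by
    rw [hQ, hP, hd0, hd1, hδ]
    push_cast
    field_simp
    linear_combination -hquad
  refine ⟨hP1, hQd, ?_⟩
  have key : ∀ n : ℕ, d (n + 2) = 0 ∧ d (n + 3) = 0 := by
    intro n
    induction n with
    | zero =>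
      have h2 := hrec 2 (by norm_num)
      have h3 := hrec 3 (by norm_num)
      norm_num at h2 h3
      have hd2 : d 2 = 0 := by
        have h : R 2 * d 2 = 0 := by linear_combination h2 - hQd
        rcases mul_eq_zero.mp h with h | h
        · exact absurd h (hRne 2 (by norm_num))
        · exact h
      have hd3 : d 3 = 0 := by
        have h : R 3 * d 3 = 0 := by
          linear_combination h3 - Q 2 * hd2 - d 1 * hP1
        rcases mul_eq_zero.mp h with h | h
        · exact absurd h (hRne 3 (by norm_num))
        · exact h
      exact ⟨hd2, hd3⟩
    | succ n ih =>
      obtain ⟨ih1, ih2⟩ := ih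
      refine ⟨ih2, ?_⟩
      have h := hrec (n + 4) (by omega)
      simp only [show n + 4 - 1 = n + 3 from rfl, show n + 4 - 2 = n + 2 from rfl] at h
      have h' : R (n + 4) * d (n + 4) = 0 := by
        linear_combination h - Q (n + 3) * ih2 - P (n + 2) * ih1
      rcases mul_eq_zero.mp h' with h'' | h''
      · exact absurd h'' (hRne (n + 4) (by omega))
      · exact h''
  intro n hn
  obtain ⟨k, rfl⟩ := Nat.exists_eq_add_of_le hn
  have := (key k).1
  simpa [Nat.add_comm] using this
end

section
/- With recurrence coefficients R_n = an(n+α-1)(n+β-1), Q_n = a(n+α)(n+β) + (a-1)n(n+ε-1) - γn - q, P_n = (a-1)(n+ε) and d₀ = 1, the termination conditions for N = 1 are: ε = -1 and q² - (1 - γ + a(2αβ + α + β))q + aαβ(-γ + a(α+1)(β+1)) = 0. -/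
/-- For the general Heun recurrence with
`R_n = an(n+α-1)(n+β-1)`, `Q_n = a(n+α)(n+β) + (a-1)n(n+ε-1) - γn - q`,
`P_n = (a-1)(n+ε)`, `d₀ = 1` and `d₁ = -Q₀/R₁ = (q-aαβ)/(aαβ)`: if `ε = -1` and `q`
satisfies the quadratic `q² - (1 - γ + a(2αβ+α+β))q + aαβ(-γ + a(α+1)(β+1)) = 0`,
then `P₁ = 0` and `Q₁d₁ + P₀d₀ = 0`, and hence `d_n = 0` for all `n ≥ 2`. -/
theorem heun_N1_termination
    (a q α β γ ε : ℂ) (ha0 : a ≠ 0) (ha1 : a ≠ 1) (hα : α ≠ 0) (hβ : β ≠ 0)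
    (R Q P d : ℕ → ℂ)
    (hR : ∀ n : ℕ, R n = a * n * (n + α - 1) * (n + β - 1))
    (hQ : ∀ n : ℕ, Q n = a * (n + α) * (n + β) + (a - 1) * n * (n + ε - 1) - γ * n - q)
    (hP : ∀ n : ℕ, P n = (a - 1) * (n + ε))
    (hRne : ∀ n : ℕ, 1 ≤ n → R n ≠ 0)
    (hε : ε = -1)
    (hquad : q ^ 2 - (1 - γ + a * (2 * α * β + α + β)) * q
      + a * α * β * (-γ + a * (α + 1) * (β + 1)) = 0)
    (hd0 : d 0 = 1) (hd1 : d 1 = (q - a * α * β) / (a * α * β))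
    (hrec : ∀ n : ℕ, 2 ≤ n →
      R n * d n + Q (n - 1) * d (n - 1) + P (n - 2) * d (n - 2) = 0) :
    P 1 = 0 ∧ Q 1 * d 1 + P 0 * d 0 = 0 ∧ ∀ n : ℕ, 2 ≤ n → d n = 0 := by
  have haαβ : a * α * β ≠ 0 := by
    exact mul_ne_zero (mul_ne_zero ha0 hα) hβ
  have hP1 : P 1 = 0 := by rw [hP, hε]; push_cast; ring
  have hkey : Q 1 * d 1 + P 0 * d 0 = 0 := by
    rw [hQ, hP, hd0, hd1, hε]
    push_cast
    field_simp
    linear_combination -hquad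
  refine ⟨hP1, hkey, ?_⟩
  have hz : ∀ n : ℕ, d (n + 2) = 0 := by
    intro n
    induction n using Nat.strong_induction_on with
    | _ n ih =>
      have hrn := hrec (n + 2) (by omega)
      have h1 : n + 2 - 1 = n + 1 := by omega
      have h2 : n + 2 - 2 = n := by omega
      rw [h1, h2] at hrn
      have hRne2 : R (n + 2) ≠ 0 := hRne (n + 2) (by omega)
      match n, ih with
      | 0, ih =>
        have : R 2 * d 2 = 0 := by linear_combination hrn - hkey
        exact (mul_eq_zero.mp this).resolve_left hRne2
      | 1, ih =>
        have hd2 : d 2 = 0 := ih 0 (by omega)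
        have : R 3 * d 3 = 0 := by rw [hd2, hP1] at hrn; linear_combination hrn
        exact (mul_eq_zero.mp this).resolve_left hRne2
      | (m + 2), ih =>
        have ha : d (m + 3) = 0 := ih (m + 1) (by omega)
        have hb : d (m + 2) = 0 := ih m (by omega)
        have : R (m + 4) * d (m + 4) = 0 := by
          rw [show m + 2 + 2 = m + 4 by omega, show m + 2 + 1 = m + 3 by omega] at hrn
          rw [ha, hb] at hrn; linear_combination hrn
        have := (mul_eq_zero.mp this).resolve_left (by rwa [show m+2+2 = m+4 by omega] at hRne2)
        rwa [show m + 2 + 2 = m + 4 by omega]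
  intro n hn
  obtain ⟨m, rfl⟩ : ∃ m, n = m + 2 := ⟨n - 2, by omega⟩
  exact hz m
end
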